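/- Let F be a Hurwitz matrix, P∞ the symmetric positive semidefinite solution of F·P∞ + P∞·Fᵀ + Q = 0 with Q positive semidefinite, and for Δ > 0 define Φ = exp(F·Δ). Then the matrix Q_Δ = P∞ − Φ·P∞·Φᵀ is symmetric positive semidefinite. -/

import Mathlib

open Matrix NormedSpace

attribute [local instance] Matrix.linftyOpNormedRing Matrix.linftyOpNormedAlgebra

/-- Eq. (15): the discrete-time process noise covariance
`Q_Δ = P∞ - Φ * P∞ * Φᵀ` with `Φ = exp (Δ • F)` is symmetric positive
semidefinite, where `P∞` is the symmetric PSD solution of the Lyapunov equation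
`F * P∞ + P∞ * Fᵀ + Q = 0` for a Hurwitz `F` and PSD `Q`. -/
theorem discrete_noise_posSemidef (n : ℕ) (F Q Pinf : Matrix (Fin n) (Fin n) ℝ)
    (hF : ∀ μ ∈ spectrum ℂ (F.map (algebraMap ℝ ℂ)), μ.re < 0)
    (hQ : Q.PosSemidef)
    (hPsymm : Pinf.IsSymm) (hP : Pinf.PosSemidef)
    (hLyap : F * Pinf + Pinf * Fᵀ + Q = 0)
    (Δ : ℝ) (hΔ : 0 < Δ) :
    (Pinf - NormedSpace.exp (Δ • F) * Pinf * (NormedSpace.exp (Δ • F))ᵀ).IsSymm ∧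
      (Pinf - NormedSpace.exp (Δ • F) * Pinf * (NormedSpace.exp (Δ • F))ᵀ).PosSemidef := by
  have hsymm : (Pinf - exp (Δ • F) * Pinf * (exp (Δ • F))ᵀ).IsSymm := by
    unfold Matrix.IsSymm
    simp [Matrix.transpose_sub, Matrix.transpose_mul, hPsymm.eq, Matrix.mul_assoc]
  refine ⟨hsymm, posSemidef_iff_dotProduct_mulVec.2 ⟨?_, ?_⟩⟩
  · rw [Matrix.IsHermitian]
    simpa using hsymm.eq
  intro x
  -- scalar function
  set L : Matrix (Fin n) (Fin n) ℝ →ₗ[ℝ] ℝ :=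
    { toFun := fun M => x ⬝ᵥ M.mulVec x
      map_add' := by intro a b; simp [Matrix.add_mulVec, dotProduct_add]
      map_smul' := by intro c a; simp [Matrix.smul_mulVec, dotProduct_smul] } with hL
  set f : ℝ → ℝ := fun t => L (exp (t • F) * Pinf * exp (t • Fᵀ)) with hf
  have hderiv : ∀ t : ℝ, HasDerivAt f
      (-(((exp (t • F))ᵀ.mulVec x) ⬝ᵥ Q.mulVec ((exp (t • F))ᵀ.mulVec x))) t := by
    intro t
    have hE : HasDerivAt (fun u : ℝ => exp (u • F)) (exp (t • F) * F) t :=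
      hasDerivAt_exp_smul_const F t
    have hEt : HasDerivAt (fun u : ℝ => exp (u • Fᵀ)) (Fᵀ * exp (t • Fᵀ)) t :=
      hasDerivAt_exp_smul_const' Fᵀ t
    have hM : HasDerivAt (fun u : ℝ => exp (u • F) * Pinf * exp (u • Fᵀ))
        ((exp (t • F) * F * Pinf) * exp (t • Fᵀ)
          + (exp (t • F) * Pinf) * (Fᵀ * exp (t • Fᵀ))) t :=
      (hE.mul_const Pinf).mul hEt
    have := (L.toContinuousLinearMap.hasFDerivAt.comp_hasDerivAt t hM)
    convert this using 1
    case e'_4 => rfl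
    case e'_5 => rfl
    case e'_8 => rfl
    have key : (exp (t • F) * F * Pinf) * exp (t • Fᵀ)
          + (exp (t • F) * Pinf) * (Fᵀ * exp (t • Fᵀ))
        = exp (t • F) * (-Q) * exp (t • Fᵀ) := by
      have : F * Pinf + Pinf * Fᵀ = -Q := by
        rw [eq_neg_iff_add_eq_zero]; exact hLyap
      rw [Matrix.mul_assoc (exp (t • F)) (-Q), ← this]
      noncomm_ring
    rw [key]
    have hEt' : exp (t • Fᵀ) = (exp (t • F))ᵀ := by
      rw [← Matrix.transpose_smul, Matrix.exp_transpose]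
    rw [hEt']
    show _ = x ⬝ᵥ (exp (t • F) * -Q * (exp (t • F))ᵀ) *ᵥ x
    simp only [← Matrix.mulVec_mulVec, Matrix.neg_mulVec, Matrix.mulVec_neg, dotProduct_neg,
      neg_inj, Matrix.mulVec_transpose, Matrix.dotProduct_mulVec]
  have hT : ∀ t : ℝ, exp (t • Fᵀ) = (exp (t • F))ᵀ := fun t => by
    rw [← Matrix.transpose_smul, Matrix.exp_transpose]
  have hmono : Antitone f :=
    antitone_of_deriv_nonpos (fun t => (hderiv t).differentiableAt) fun t => by
      rw [(hderiv t).deriv, neg_nonpos]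
      simpa using hQ.dotProduct_mulVec_nonneg ((exp (t • F))ᵀ.mulVec x)
  have h0 : f 0 = x ⬝ᵥ Pinf *ᵥ x := by
    show x ⬝ᵥ (exp ((0:ℝ) • F) * Pinf * exp ((0:ℝ) • Fᵀ)) *ᵥ x = _
    simp [exp_zero]
  have hD : f Δ = x ⬝ᵥ (exp (Δ • F) * Pinf * (exp (Δ • F))ᵀ) *ᵥ x := by
    show x ⬝ᵥ (exp (Δ • F) * Pinf * exp (Δ • Fᵀ)) *ᵥ x = _
    rw [hT]
  have hle : f Δ ≤ f 0 := hmono hΔ.le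
  rw [h0, hD] at hle
  simpa [Matrix.sub_mulVec, dotProduct_sub, sub_nonneg] using hle
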